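/- Let a : [0,1] → ℝ be continuous with ω₀ := max_{0≤r≤1} a(r), let λ ∈ ℂ with Re λ > ω₀, let f : [0,1] → ℂ be continuous, and fix r₀ ∈ (0,1). Define, for 0 < r < 1, q(r) = e^{∫_{r₀}^r (a(ρ)−λ)/w(ρ) dρ} · ∫_r^1 (f(η)/w(η)) · e^{−∫_{r₀}^η (a(ρ)−λ)/w(ρ) dρ} dη. Then q extends to a continuous function on [0,1], q is continuously differentiable on (0,1) and satisfies −w(r)q'(r) + a(r)q(r) − λ·q(r) = f(r) for all r ∈ (0,1), and max_{0≤r≤1}|q(r)| ≤ max_{0≤η≤1} |f(η)|/(Re λ − a(η)) ≤ ‖f‖_∞/(Re λ − ω₀). -/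

import Mathlib

open Set MeasureTheory intervalIntegral Filter Topology

noncomputable section Stmt14Aux

variable {w a : ℝ → ℝ} {lam : ℂ} {r₀ : ℝ} {C₁ C₂ ω₀ : ℝ}

def gg (w a : ℝ → ℝ) (lam : ℂ) : ℝ → ℂ := fun ρ => ((a ρ : ℂ) - lam) / (w ρ : ℂ)

def AA (w a : ℝ → ℝ) (lam : ℂ) (r₀ : ℝ) : ℝ → ℂ := fun r => ∫ ρ in r₀..r, gg w a lam ρ

def uu (w a : ℝ → ℝ) (lam : ℂ) (r₀ : ℝ) : ℝ → ℝ := fun r => Real.exp (-(AA w a lam r₀ r).re)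

lemma lem_ggcont (hwC : ContinuousOn w (Set.Icc 0 1)) (ha : ContinuousOn a (Set.Icc 0 1))
    (hwneg : ∀ r ∈ Set.Ioo (0:ℝ) 1, w r < 0) :
    ContinuousOn (gg w a lam) (Set.Ioo 0 1) := by
  apply ContinuousOn.div
  · exact (Complex.continuous_ofReal.comp_continuousOn
      (ha.mono Ioo_subset_Icc_self)).sub continuousOn_const
  · exact Complex.continuous_ofReal.comp_continuousOn (hwC.mono Ioo_subset_Icc_self)
  · intro r hr
    exact_mod_cast (hwneg r hr).ne

lemma lem_ggre (ρ : ℝ) : (gg w a lam ρ).re = (a ρ - lam.re) / w ρ := by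
  simp [gg, Complex.div_ofReal_re]

lemma lem_ggre' (ρ : ℝ) : (gg w a lam ρ).re = (lam.re - a ρ) / (-w ρ) := by
  rw [lem_ggre, div_neg, ← neg_div, neg_sub]

lemma lem_ggii (hwC : ContinuousOn w (Set.Icc 0 1)) (ha : ContinuousOn a (Set.Icc 0 1))
    (hwneg : ∀ r ∈ Set.Ioo (0:ℝ) 1, w r < 0) {x y : ℝ}
    (hx : x ∈ Set.Ioo (0:ℝ) 1) (hy : y ∈ Set.Ioo (0:ℝ) 1) :
    IntervalIntegrable (gg w a lam) volume x y :=
  ((lem_ggcont hwC ha hwneg).mono (Set.ordConnected_Ioo.uIcc_subset hx hy)).intervalIntegrable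

lemma lem_AAder (hwC : ContinuousOn w (Set.Icc 0 1)) (ha : ContinuousOn a (Set.Icc 0 1))
    (hwneg : ∀ r ∈ Set.Ioo (0:ℝ) 1, w r < 0) (hr₀ : r₀ ∈ Set.Ioo (0:ℝ) 1)
    {r : ℝ} (hr : r ∈ Set.Ioo (0:ℝ) 1) :
    HasDerivAt (AA w a lam r₀) (gg w a lam r) r :=
  intervalIntegral.integral_hasDerivAt_right (lem_ggii hwC ha hwneg hr₀ hr)
    ((lem_ggcont hwC ha hwneg).stronglyMeasurableAtFilter isOpen_Ioo r hr)
    ((lem_ggcont hwC ha hwneg).continuousAt (Ioo_mem_nhds hr.1 hr.2))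

lemma lem_AAre_der (hwC : ContinuousOn w (Set.Icc 0 1)) (ha : ContinuousOn a (Set.Icc 0 1))
    (hwneg : ∀ r ∈ Set.Ioo (0:ℝ) 1, w r < 0) (hr₀ : r₀ ∈ Set.Ioo (0:ℝ) 1)
    {r : ℝ} (hr : r ∈ Set.Ioo (0:ℝ) 1) :
    HasDerivAt (fun x => (AA w a lam r₀ x).re) ((gg w a lam r).re) r := by
  have h := Complex.reCLM.hasFDerivAt.comp_hasDerivAt r (lem_AAder (lam := lam) hwC ha hwneg hr₀ hr)
  simp only [Complex.reCLM_apply] at h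
  exact h

lemma lem_uuder (hwC : ContinuousOn w (Set.Icc 0 1)) (ha : ContinuousOn a (Set.Icc 0 1))
    (hwneg : ∀ r ∈ Set.Ioo (0:ℝ) 1, w r < 0) (hr₀ : r₀ ∈ Set.Ioo (0:ℝ) 1)
    {r : ℝ} (hr : r ∈ Set.Ioo (0:ℝ) 1) :
    HasDerivAt (uu w a lam r₀) (-((gg w a lam r).re * uu w a lam r₀ r)) r := by
  have h := ((lem_AAre_der (lam := lam) hwC ha hwneg hr₀ hr).neg).exp
  convert h using 1
  · rfl
  simp only [uu, Pi.neg_apply]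
  ring

lemma lem_AAre (hwC : ContinuousOn w (Set.Icc 0 1)) (ha : ContinuousOn a (Set.Icc 0 1))
    (hwneg : ∀ r ∈ Set.Ioo (0:ℝ) 1, w r < 0) (hr₀ : r₀ ∈ Set.Ioo (0:ℝ) 1)
    {s : ℝ} (hs : s ∈ Set.Ioo (0:ℝ) 1) :
    (AA w a lam r₀ s).re = ∫ ρ in r₀..s, (gg w a lam ρ).re := by
  have := Complex.reCLM.intervalIntegral_comp_comm (lem_ggii (lam := lam) hwC ha hwneg hr₀ hs)
  simpa [AA] using this.symm

lemma lem_ggre_pos (hub : ∀ r ∈ Set.Icc (0:ℝ) 1, a r ≤ ω₀) (hlam : ω₀ < lam.re)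
    (hwneg : ∀ r ∈ Set.Ioo (0:ℝ) 1, w r < 0)
    {ρ : ℝ} (hρ : ρ ∈ Set.Ioo (0:ℝ) 1) : 0 < (gg w a lam ρ).re := by
  rw [lem_ggre']
  have h1 := hub ρ (Ioo_subset_Icc_self hρ)
  exact div_pos (by linarith) (by linarith [hwneg ρ hρ])

lemma lem_comp1 (hC₁ : 0 < C₁)
    (hw_lb : ∀ r ∈ Set.Icc (0:ℝ) 1, -C₁ * (r * (1 - r)) ≤ w r)
    (hub : ∀ r ∈ Set.Icc (0:ℝ) 1, a r ≤ ω₀) (hlam : ω₀ < lam.re)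
    (hwneg : ∀ r ∈ Set.Ioo (0:ℝ) 1, w r < 0)
    {ρ : ℝ} (hρ : ρ ∈ Set.Ioo (0:ℝ) 1) :
    (lam.re - ω₀) / C₁ * (1 - ρ)⁻¹ ≤ (gg w a lam ρ).re := by
  rw [lem_ggre']
  have h1 := hub ρ (Ioo_subset_Icc_self hρ)
  have h2 := hw_lb ρ (Ioo_subset_Icc_self hρ)
  have hX : 0 < -w ρ := by linarith [hwneg ρ hρ]
  have hXle : -w ρ ≤ C₁ * (1 - ρ) := by nlinarith [hρ.1, hρ.2]
  have h1ρ : (1:ℝ) - ρ ≠ 0 := by linarith [hρ.2]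
  have e1 : (lam.re - ω₀) / C₁ * (1 - ρ)⁻¹ = (lam.re - ω₀) / (C₁ * (1 - ρ)) := by
    field_simp
  rw [e1]
  calc (lam.re - ω₀) / (C₁ * (1 - ρ)) ≤ (lam.re - ω₀) / (-w ρ) :=
        div_le_div_of_nonneg_left (by linarith) hX hXle
    _ ≤ (lam.re - a ρ) / (-w ρ) := by gcongr <;> linarith

lemma lem_comp0 (hC₁ : 0 < C₁)
    (hw_lb : ∀ r ∈ Set.Icc (0:ℝ) 1, -C₁ * (r * (1 - r)) ≤ w r)
    (hub : ∀ r ∈ Set.Icc (0:ℝ) 1, a r ≤ ω₀) (hlam : ω₀ < lam.re)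
    (hwneg : ∀ r ∈ Set.Ioo (0:ℝ) 1, w r < 0)
    {ρ : ℝ} (hρ : ρ ∈ Set.Ioo (0:ℝ) 1) :
    (lam.re - ω₀) / C₁ * ρ⁻¹ ≤ (gg w a lam ρ).re := by
  rw [lem_ggre']
  have h1 := hub ρ (Ioo_subset_Icc_self hρ)
  have h2 := hw_lb ρ (Ioo_subset_Icc_self hρ)
  have hX : 0 < -w ρ := by linarith [hwneg ρ hρ]
  have hXle : -w ρ ≤ C₁ * ρ := by nlinarith [hρ.1, hρ.2]
  have hρ0 : ρ ≠ 0 := ne_of_gt hρ.1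
  have e1 : (lam.re - ω₀) / C₁ * ρ⁻¹ = (lam.re - ω₀) / (C₁ * ρ) := by
    field_simp
  rw [e1]
  calc (lam.re - ω₀) / (C₁ * ρ) ≤ (lam.re - ω₀) / (-w ρ) :=
        div_le_div_of_nonneg_left (by linarith) hX hXle
    _ ≤ (lam.re - a ρ) / (-w ρ) := by gcongr <;> linarith

lemma lem_ggrecont (hwC : ContinuousOn w (Set.Icc 0 1)) (ha : ContinuousOn a (Set.Icc 0 1))
    (hwneg : ∀ r ∈ Set.Ioo (0:ℝ) 1, w r < 0) :
    ContinuousOn (fun ρ => (gg w a lam ρ).re) (Set.Ioo 0 1) :=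
  Complex.continuous_re.comp_continuousOn (lem_ggcont hwC ha hwneg)

lemma lem_log1 (hC₁ : 0 < C₁)
    (hwC : ContinuousOn w (Set.Icc 0 1))
    (hw_lb : ∀ r ∈ Set.Icc (0:ℝ) 1, -C₁ * (r * (1 - r)) ≤ w r)
    (ha : ContinuousOn a (Set.Icc 0 1))
    (hub : ∀ r ∈ Set.Icc (0:ℝ) 1, a r ≤ ω₀) (hlam : ω₀ < lam.re)
    (hwneg : ∀ r ∈ Set.Ioo (0:ℝ) 1, w r < 0) (hr₀ : r₀ ∈ Set.Ioo (0:ℝ) 1)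
    {s : ℝ} (hs : s ∈ Set.Ico r₀ 1) :
    (lam.re - ω₀) / C₁ * (Real.log (1 - r₀) - Real.log (1 - s)) ≤ (AA w a lam r₀ s).re := by
  have hsI : s ∈ Set.Ioo (0:ℝ) 1 := ⟨lt_of_lt_of_le hr₀.1 hs.1, hs.2⟩
  have hsub : Set.uIcc r₀ s ⊆ Set.Ioo 0 1 := Set.ordConnected_Ioo.uIcc_subset hr₀ hsI
  rw [lem_AAre hwC ha hwneg hr₀ hsI]
  set δ : ℝ := (lam.re - ω₀) / C₁ with hδ
  have hder : ∀ ρ ∈ Set.uIcc r₀ s,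
      HasDerivAt (fun x => -δ * Real.log (1 - x)) (δ * (1 - ρ)⁻¹) ρ := by
    intro ρ hρ
    have hρI := hsub hρ
    have h1ρ : (1:ℝ) - ρ ≠ 0 := by linarith [hρI.2]
    have h := ((Real.hasDerivAt_log h1ρ).comp ρ ((hasDerivAt_id ρ).const_sub 1)).const_mul (-δ)
    convert h using 1
    all_goals first | rfl | ring
  have hint : IntervalIntegrable (fun ρ => δ * (1 - ρ)⁻¹) volume r₀ s := by
    apply ContinuousOn.intervalIntegrable
    apply ContinuousOn.mul continuousOn_const
    apply ContinuousOn.inv₀ (by fun_prop)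
    intro ρ hρ
    have := (hsub hρ).2
    intro h; linarith [sub_eq_zero.mp h]
  have heq : ∫ ρ in r₀..s, δ * (1 - ρ)⁻¹
      = (-δ * Real.log (1 - s)) - (-δ * Real.log (1 - r₀)) :=
    intervalIntegral.integral_eq_sub_of_hasDerivAt hder hint
  have hmono : ∫ ρ in r₀..s, δ * (1 - ρ)⁻¹ ≤ ∫ ρ in r₀..s, (gg w a lam ρ).re := by
    apply intervalIntegral.integral_mono_on hs.1 hint
    · exact ((lem_ggrecont hwC ha hwneg).mono
        hsub).intervalIntegrable
    · intro ρ hρ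
      exact lem_comp1 hC₁ hw_lb hub hlam hwneg
        (hsub (by rw [Set.uIcc_of_le hs.1]; exact hρ))
  calc δ * (Real.log (1 - r₀) - Real.log (1 - s))
      = (-δ * Real.log (1 - s)) - (-δ * Real.log (1 - r₀)) := by ring
    _ = ∫ ρ in r₀..s, δ * (1 - ρ)⁻¹ := heq.symm
    _ ≤ _ := hmono

lemma lem_log0 (hC₁ : 0 < C₁)
    (hwC : ContinuousOn w (Set.Icc 0 1))
    (hw_lb : ∀ r ∈ Set.Icc (0:ℝ) 1, -C₁ * (r * (1 - r)) ≤ w r)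
    (ha : ContinuousOn a (Set.Icc 0 1))
    (hub : ∀ r ∈ Set.Icc (0:ℝ) 1, a r ≤ ω₀) (hlam : ω₀ < lam.re)
    (hwneg : ∀ r ∈ Set.Ioo (0:ℝ) 1, w r < 0) (hr₀ : r₀ ∈ Set.Ioo (0:ℝ) 1)
    {s : ℝ} (hs : s ∈ Set.Ioc 0 r₀) :
    (AA w a lam r₀ s).re ≤ (lam.re - ω₀) / C₁ * (Real.log s - Real.log r₀) := by
  have hsI : s ∈ Set.Ioo (0:ℝ) 1 := ⟨hs.1, lt_of_le_of_lt hs.2 hr₀.2⟩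
  have hsub : Set.uIcc s r₀ ⊆ Set.Ioo 0 1 := Set.ordConnected_Ioo.uIcc_subset hsI hr₀
  rw [lem_AAre hwC ha hwneg hr₀ hsI, intervalIntegral.integral_symm]
  set δ : ℝ := (lam.re - ω₀) / C₁ with hδ
  have hder : ∀ ρ ∈ Set.uIcc s r₀,
      HasDerivAt (fun x => δ * Real.log x) (δ * ρ⁻¹) ρ := by
    intro ρ hρ
    have hρI := hsub hρ
    exact (Real.hasDerivAt_log (ne_of_gt hρI.1)).const_mul δ
  have hint : IntervalIntegrable (fun ρ => δ * ρ⁻¹) volume s r₀ := by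
    apply ContinuousOn.intervalIntegrable
    apply ContinuousOn.mul continuousOn_const
    apply ContinuousOn.inv₀ (by fun_prop)
    exact fun ρ hρ => ne_of_gt (hsub hρ).1
  have heq : ∫ ρ in s..r₀, δ * ρ⁻¹ = δ * Real.log r₀ - δ * Real.log s :=
    intervalIntegral.integral_eq_sub_of_hasDerivAt hder hint
  have hmono : ∫ ρ in s..r₀, δ * ρ⁻¹ ≤ ∫ ρ in s..r₀, (gg w a lam ρ).re := by
    apply intervalIntegral.integral_mono_on hs.2 hint
    · exact ((lem_ggrecont hwC ha hwneg).mono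
        hsub).intervalIntegrable
    · intro ρ hρ
      exact lem_comp0 hC₁ hw_lb hub hlam hwneg
        (hsub (by rw [Set.uIcc_of_le hs.2]; exact hρ))
  have := le_trans heq.ge hmono
  linarith [hmono, heq]

lemma lem_u1 (hC₁ : 0 < C₁)
    (hwC : ContinuousOn w (Set.Icc 0 1))
    (hw_lb : ∀ r ∈ Set.Icc (0:ℝ) 1, -C₁ * (r * (1 - r)) ≤ w r)
    (ha : ContinuousOn a (Set.Icc 0 1))
    (hub : ∀ r ∈ Set.Icc (0:ℝ) 1, a r ≤ ω₀) (hlam : ω₀ < lam.re)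
    (hwneg : ∀ r ∈ Set.Ioo (0:ℝ) 1, w r < 0) (hr₀ : r₀ ∈ Set.Ioo (0:ℝ) 1) :
    Filter.Tendsto (uu w a lam r₀) (nhdsWithin 1 (Set.Iio 1)) (nhds 0) := by
  set δ : ℝ := (lam.re - ω₀) / C₁ with hδdef
  have hδ : 0 < δ := div_pos (by linarith) hC₁
  have hlog : Filter.Tendsto (fun s : ℝ => Real.log (1 - s)) (nhdsWithin 1 (Set.Iio 1))
      Filter.atBot := by
    apply Real.tendsto_log_nhdsGT_zero.comp
    rw [tendsto_nhdsWithin_iff]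
    constructor
    · have : Filter.Tendsto (fun s : ℝ => 1 - s) (nhds 1) (nhds 0) := by
        have h := ((continuous_const (y := (1:ℝ))).sub continuous_id).tendsto 1
        simpa [Pi.sub_def] using h
      exact this.mono_left nhdsWithin_le_nhds
    · filter_upwards [self_mem_nhdsWithin] with s hs
      exact Set.mem_Ioi.mpr (by simp only [Set.mem_Iio] at hs; linarith)
  have hg : Filter.Tendsto (fun s : ℝ => Real.exp (δ * Real.log (1 - s) - δ * Real.log (1 - r₀)))
      (nhdsWithin 1 (Set.Iio 1)) (nhds 0) := by
    apply Real.tendsto_exp_atBot.comp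
    apply Filter.tendsto_atBot_add_const_right
    exact (hlog.const_mul_atBot hδ)
  apply squeeze_zero' ?_ ?_ hg
  · filter_upwards with s using Real.exp_nonneg _
  · filter_upwards [Ioo_mem_nhdsLT_of_mem (Set.mem_Ioc.mpr ⟨hr₀.2, le_refl 1⟩)] with s hs
    have hb := lem_log1 hC₁ hwC hw_lb ha hub hlam hwneg hr₀ (Set.mem_Ico.mpr ⟨le_of_lt hs.1, hs.2⟩)
    rw [show δ * Real.log (1 - s) - δ * Real.log (1 - r₀)
        = -(δ * (Real.log (1 - r₀) - Real.log (1 - s))) by ring]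
    exact Real.exp_le_exp.mpr (neg_le_neg hb)

lemma lem_E0 (hC₁ : 0 < C₁)
    (hwC : ContinuousOn w (Set.Icc 0 1))
    (hw_lb : ∀ r ∈ Set.Icc (0:ℝ) 1, -C₁ * (r * (1 - r)) ≤ w r)
    (ha : ContinuousOn a (Set.Icc 0 1))
    (hub : ∀ r ∈ Set.Icc (0:ℝ) 1, a r ≤ ω₀) (hlam : ω₀ < lam.re)
    (hwneg : ∀ r ∈ Set.Ioo (0:ℝ) 1, w r < 0) (hr₀ : r₀ ∈ Set.Ioo (0:ℝ) 1) :
    Filter.Tendsto (fun r => Real.exp ((AA w a lam r₀ r).re)) (nhdsWithin 0 (Set.Ioi 0))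
      (nhds 0) := by
  set δ : ℝ := (lam.re - ω₀) / C₁ with hδdef
  have hδ : 0 < δ := div_pos (by linarith) hC₁
  have hlog : Filter.Tendsto (fun s : ℝ => Real.log s) (nhdsWithin 0 (Set.Ioi 0))
      Filter.atBot := Real.tendsto_log_nhdsGT_zero
  have hg : Filter.Tendsto (fun s : ℝ => Real.exp (δ * Real.log s - δ * Real.log r₀))
      (nhdsWithin 0 (Set.Ioi 0)) (nhds 0) := by
    apply Real.tendsto_exp_atBot.comp
    apply Filter.tendsto_atBot_add_const_right
    exact (hlog.const_mul_atBot hδ)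
  apply squeeze_zero' ?_ ?_ hg
  · filter_upwards with s using Real.exp_nonneg _
  · filter_upwards [Ioo_mem_nhdsGT_of_mem (Set.mem_Ico.mpr ⟨le_refl 0, hr₀.1⟩)] with s hs
    have hb := lem_log0 hC₁ hwC hw_lb ha hub hlam hwneg hr₀ (Set.mem_Ioc.mpr ⟨hs.1, le_of_lt hs.2⟩)
    rw [show δ * Real.log s - δ * Real.log r₀ = δ * (Real.log s - Real.log r₀) by ring]
    exact Real.exp_le_exp.mpr hb

lemma lem_w1 (hC₁ : 0 < C₁) (hw_lb : ∀ r ∈ Set.Icc (0:ℝ) 1, -C₁ * (r * (1 - r)) ≤ w r)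
    (hw_ub : ∀ r ∈ Set.Icc (0:ℝ) 1, w r ≤ -C₂ * (r * (1 - r))) : w 1 = 0 := by
  have h1 := hw_lb 1 (by norm_num)
  have h2 := hw_ub 1 (by norm_num)
  nlinarith

def DD (w a : ℝ → ℝ) (lam : ℂ) (r₀ : ℝ) : ℝ → ℝ :=
  fun η => (gg w a lam η).re * uu w a lam r₀ η

lemma lem_uucont (hwC : ContinuousOn w (Set.Icc 0 1)) (ha : ContinuousOn a (Set.Icc 0 1))
    (hwneg : ∀ r ∈ Set.Ioo (0:ℝ) 1, w r < 0) (hr₀ : r₀ ∈ Set.Ioo (0:ℝ) 1) :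
    ContinuousOn (uu w a lam r₀) (Set.Ioo 0 1) := fun r hr =>
  (lem_uuder hwC ha hwneg hr₀ hr).continuousAt.continuousWithinAt

lemma lem_DDcont (hwC : ContinuousOn w (Set.Icc 0 1)) (ha : ContinuousOn a (Set.Icc 0 1))
    (hwneg : ∀ r ∈ Set.Ioo (0:ℝ) 1, w r < 0) (hr₀ : r₀ ∈ Set.Ioo (0:ℝ) 1) :
    ContinuousOn (DD w a lam r₀) (Set.Ioo 0 1) :=
  (lem_ggrecont hwC ha hwneg).mul (lem_uucont hwC ha hwneg hr₀)

lemma lem_DDnonneg (hub : ∀ r ∈ Set.Icc (0:ℝ) 1, a r ≤ ω₀) (hlam : ω₀ < lam.re)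
    (hwneg : ∀ r ∈ Set.Ioo (0:ℝ) 1, w r < 0) {η : ℝ} (hη : η ∈ Set.Ioo (0:ℝ) 1) :
    0 ≤ DD w a lam r₀ η :=
  mul_nonneg (le_of_lt (lem_ggre_pos hub hlam hwneg hη)) (Real.exp_nonneg _)

lemma lem_normPhi {h : ℝ → ℂ} {η : ℝ} (hwη : w η < 0) :
    ‖h η / (w η : ℂ) * Complex.exp (-(AA w a lam r₀ η))‖
      = ‖h η‖ / (-(w η)) * uu w a lam r₀ η := by
  simp only [norm_mul, norm_div, Complex.norm_real, Real.norm_eq_abs,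
    Complex.norm_exp, Complex.neg_re, uu]
  rw [abs_of_neg hwη]

section Master

variable (hC₁ : 0 < C₁) (hC₂ : 0 < C₂)
  (hwC : ContinuousOn w (Set.Icc 0 1))
  (hw_lb : ∀ r ∈ Set.Icc (0:ℝ) 1, -C₁ * (r * (1 - r)) ≤ w r)
  (hw_ub : ∀ r ∈ Set.Icc (0:ℝ) 1, w r ≤ -C₂ * (r * (1 - r)))
  (ha : ContinuousOn a (Set.Icc 0 1))
  (hub : ∀ r ∈ Set.Icc (0:ℝ) 1, a r ≤ ω₀) (hlam : ω₀ < lam.re)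
  (hwneg : ∀ r ∈ Set.Ioo (0:ℝ) 1, w r < 0) (hr₀ : r₀ ∈ Set.Ioo (0:ℝ) 1)

include hC₁ hwC hw_lb ha hub hlam hwneg hr₀

lemma lem_DD_int1 {r : ℝ} (hr : r ∈ Set.Ioo (0:ℝ) 1) :
    IntegrableOn (DD w a lam r₀) (Set.Ioc r 1) volume ∧
      ∫ η in r..(1:ℝ), DD w a lam r₀ η = uu w a lam r₀ r := by
  set U : ℝ → ℝ := fun s => if s < 1 then -(uu w a lam r₀ s) else 0 with hU
  have hU1 : U 1 = 0 := by simp [hU]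
  have hUoflt : ∀ s : ℝ, s < 1 → U s = -(uu w a lam r₀ s) := by
    intro s hs; simp [hU, hs]
  have hUcont : ContinuousOn U (Set.Icc r 1) := by
    intro x hx
    rcases eq_or_lt_of_le hx.2 with h1 | h1
    · subst h1
      have hten : Filter.Tendsto U (nhdsWithin 1 (Set.Iio 1)) (nhds 0) := by
        have h0 : Filter.Tendsto (fun s => -(uu w a lam r₀ s)) (nhdsWithin 1 (Set.Iio 1))
            (nhds 0) := by
          have := (lem_u1 hC₁ hwC hw_lb ha hub hlam hwneg hr₀).neg
          simpa using this
        apply Filter.Tendsto.congr' ?_ h0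
        filter_upwards [self_mem_nhdsWithin] with s hs
        rw [hUoflt s hs]
      have h2 : ContinuousWithinAt U (Set.Iio 1) 1 := by
        unfold ContinuousWithinAt
        rw [hU1]; exact hten
      exact (continuousWithinAt_insert_self.mpr h2).mono
        (fun y hy => by
          rcases lt_or_eq_of_le hy.2 with h | h
          · exact Set.mem_insert_of_mem _ h
          · rw [h]; exact Set.mem_insert _ _)
    · have hxI : x ∈ Set.Ioo (0:ℝ) 1 := ⟨lt_of_lt_of_le hr.1 hx.1, h1⟩
      apply ContinuousAt.continuousWithinAt
      apply ContinuousAt.congr (((lem_uucont (lam := lam) hwC ha hwneg hr₀) x hxI).continuousAt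
        (Ioo_mem_nhds hxI.1 hxI.2)).neg
      filter_upwards [Iio_mem_nhds h1] with s hs
      rw [hUoflt s hs]; rfl
  have hUder : ∀ x ∈ Set.Ioo r 1, HasDerivAt U (DD w a lam r₀ x) x := by
    intro x hx
    have hxI : x ∈ Set.Ioo (0:ℝ) 1 := ⟨lt_trans hr.1 hx.1, hx.2⟩
    have h := (lem_uuder (lam := lam) hwC ha hwneg hr₀ hxI).neg
    rw [neg_neg] at h
    apply h.congr_of_eventuallyEq
    filter_upwards [Iio_mem_nhds hx.2] with s hs
    rw [hUoflt s hs]; rfl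
  have hnn : ∀ x ∈ Set.Ioo r 1, 0 ≤ DD w a lam r₀ x := fun x hx =>
    lem_DDnonneg hub hlam hwneg ⟨lt_trans hr.1 hx.1, hx.2⟩
  have hint : IntegrableOn (DD w a lam r₀) (Set.Ioc r 1) volume :=
    integrableOn_deriv_of_nonneg hUcont hUder hnn
  refine ⟨hint, ?_⟩
  have := intervalIntegral.integral_eq_sub_of_hasDeriv_right_of_le (le_of_lt hr.2) hUcont
    (fun x hx => (hUder x hx).hasDerivWithinAt)
    ((intervalIntegrable_iff_integrableOn_Ioc_of_le (le_of_lt hr.2)).mpr hint)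
  rw [this, hU1, hUoflt r hr.2]
  ring

omit hC₁ hw_lb hub hlam in
lemma lem_Phicont {h : ℝ → ℂ} (hh : ContinuousOn h (Set.Icc 0 1)) :
    ContinuousOn (fun η => h η / (w η : ℂ) * Complex.exp (-(AA w a lam r₀ η)))
      (Set.Ioo 0 1) := by
  apply ContinuousOn.mul
  · exact ContinuousOn.div (hh.mono Ioo_subset_Icc_self)
      (Complex.continuous_ofReal.comp_continuousOn (hwC.mono Ioo_subset_Icc_self))
      (fun r hr => by exact_mod_cast (hwneg r hr).ne)
  · apply Complex.continuous_exp.comp_continuousOn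
    apply ContinuousOn.neg
    exact fun r hr => ((lem_AAder hwC ha hwneg hr₀ hr).continuousAt).continuousWithinAt

lemma lem_Phi_int {h : ℝ → ℂ} (hh : ContinuousOn h (Set.Icc 0 1)) {r : ℝ}
    (hr : r ∈ Set.Ioo (0:ℝ) 1) :
    IntegrableOn (fun η => h η / (w η : ℂ) * Complex.exp (-(AA w a lam r₀ η)))
      (Set.Ioc r 1) volume := by
  obtain ⟨M, hM⟩ := (isCompact_Icc (a := (0:ℝ)) (b := 1)).exists_bound_of_continuousOn hh
  have hδ : 0 < lam.re - ω₀ := by linarith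
  set N : ℝ := M / (lam.re - ω₀) with hNdef
  have hM0 : 0 ≤ M := le_trans (norm_nonneg _) (hM 0 (by norm_num))
  have hN0 : 0 ≤ N := div_nonneg hM0 (le_of_lt hδ)
  have hMN : M = N * (lam.re - ω₀) := (div_mul_cancel₀ M (ne_of_gt hδ)).symm
  rw [integrableOn_Ioc_iff_integrableOn_Ioo]
  apply Integrable.mono (g := fun η => N * DD w a lam r₀ η)
  · exact ((lem_DD_int1 hC₁ hwC hw_lb ha hub hlam hwneg hr₀ hr).1.mono_set
      Set.Ioo_subset_Ioc_self).const_mul N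
  · exact ((lem_Phicont hwC ha hwneg hr₀ hh).mono
      (Set.Ioo_subset_Ioo (le_of_lt hr.1) le_rfl)).aestronglyMeasurable measurableSet_Ioo
  · rw [ae_restrict_iff' measurableSet_Ioo]
    apply Filter.Eventually.of_forall
    intro η hη
    have hηI : η ∈ Set.Ioo (0:ℝ) 1 := ⟨lt_trans hr.1 hη.1, hη.2⟩
    rw [lem_normPhi (hwneg η hηI)]
    have hw' : 0 < -w η := neg_pos.mpr (hwneg η hηI)
    have hha : ‖h η‖ ≤ N * (lam.re - a η) := by
      have := hM η (Ioo_subset_Icc_self hηI)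
      have := hub η (Ioo_subset_Icc_self hηI)
      nlinarith
    have key : ‖h η‖ / (-(w η)) * uu w a lam r₀ η ≤ N * DD w a lam r₀ η :=
      calc ‖h η‖ / (-(w η)) * uu w a lam r₀ η
          ≤ (N * (lam.re - a η)) / (-(w η)) * uu w a lam r₀ η := by
            gcongr
            exact Real.exp_nonneg _
        _ = N * DD w a lam r₀ η := by
            unfold DD
            rw [lem_ggre']
            ring
    exact key.trans ((le_abs_self _).trans_eq (Real.norm_eq_abs _).symm)

lemma lem_Phi_ii {h : ℝ → ℂ} (hh : ContinuousOn h (Set.Icc 0 1)) {r : ℝ}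
    (hr : r ∈ Set.Ioo (0:ℝ) 1) :
    IntervalIntegrable (fun η => h η / (w η : ℂ) * Complex.exp (-(AA w a lam r₀ η)))
      volume r 1 :=
  (intervalIntegrable_iff_integrableOn_Ioc_of_le (le_of_lt hr.2)).mpr
    (lem_Phi_int hC₁ hwC hw_lb ha hub hlam hwneg hr₀ hh hr)

include hC₂ hw_ub in
lemma lem_Phi_bound1 {h : ℝ → ℂ} (hh : ContinuousOn h (Set.Icc 0 1)) {r : ℝ}
    (hr : r ∈ Set.Ioo (0:ℝ) 1) {N : ℝ}
    (hN : ∀ η ∈ Set.Icc r 1, ‖h η‖ ≤ N * (lam.re - a η)) :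
    ‖∫ η in r..(1:ℝ), h η / (w η : ℂ) * Complex.exp (-(AA w a lam r₀ η))‖
      ≤ N * uu w a lam r₀ r := by
  have hδ : 0 < lam.re - ω₀ := by linarith
  have hw1 : w 1 = 0 := lem_w1 hC₁ hw_lb hw_ub
  have hN0 : 0 ≤ N := by
    have h1 := hN 1 ⟨le_of_lt hr.2, le_refl 1⟩
    have h2 := hub 1 (by norm_num)
    nlinarith [norm_nonneg (h 1)]
  obtain ⟨hDint, hDeq⟩ := lem_DD_int1 hC₁ hwC hw_lb ha hub hlam hwneg hr₀ hr
  have hDD_ii : IntervalIntegrable (fun η => N * DD w a lam r₀ η) volume r 1 :=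
    (intervalIntegrable_iff_integrableOn_Ioc_of_le (le_of_lt hr.2)).mpr (hDint.const_mul N)
  have hb := intervalIntegral.norm_integral_le_of_norm_le (μ := volume)
    (f := fun η => h η / (w η : ℂ) * Complex.exp (-(AA w a lam r₀ η)))
    (g := fun η => N * DD w a lam r₀ η) (a := r) (b := 1) (le_of_lt hr.2) ?_ hDD_ii
  · have heq : ∫ η in r..(1:ℝ), N * DD w a lam r₀ η = N * uu w a lam r₀ r := by
      rw [intervalIntegral.integral_const_mul, hDeq]
    have huu : (0:ℝ) ≤ uu w a lam r₀ r := Real.exp_nonneg _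
    rw [heq] at hb
    exact hb
  · apply Filter.Eventually.of_forall
    intro η hη
    change ‖h η / (w η : ℂ) * Complex.exp (-(AA w a lam r₀ η))‖ ≤ N * DD w a lam r₀ η
    rcases lt_or_eq_of_le hη.2 with h1 | h1
    · have hηI : η ∈ Set.Ioo (0:ℝ) 1 := ⟨lt_trans hr.1 hη.1, h1⟩
      rw [lem_normPhi (hwneg η hηI)]
      have hw' : 0 < -w η := neg_pos.mpr (hwneg η hηI)
      calc ‖h η‖ / (-(w η)) * uu w a lam r₀ η
          ≤ (N * (lam.re - a η)) / (-(w η)) * uu w a lam r₀ η := by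
            gcongr
            · exact Real.exp_nonneg _
            · exact hN η ⟨le_of_lt hη.1, le_of_lt h1⟩
        _ = N * DD w a lam r₀ η := by
            unfold DD
            rw [lem_ggre']
            ring
    · have hwη : (w η : ℂ) = 0 := by rw [h1, hw1]; norm_num
      rw [hwη, div_zero, zero_mul, norm_zero]
      have hDD0 : DD w a lam r₀ η = 0 := by
        unfold DD gg
        rw [hwη]
        simp
      rw [hDD0, mul_zero]

omit hC₁ hw_lb hub hlam in
lemma lem_DD_fin {r s : ℝ} (hr : r ∈ Set.Ioo (0:ℝ) 1) (hs : s ∈ Set.Ioo (0:ℝ) 1) :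
    ∫ η in r..s, DD w a lam r₀ η = uu w a lam r₀ r - uu w a lam r₀ s := by
  have hsub : Set.uIcc r s ⊆ Set.Ioo 0 1 := Set.ordConnected_Ioo.uIcc_subset hr hs
  have hder : ∀ x ∈ Set.uIcc r s, HasDerivAt (fun y => -(uu w a lam r₀ y))
      (DD w a lam r₀ x) x := by
    intro x hx
    have h := (lem_uuder (lam := lam) hwC ha hwneg hr₀ (hsub hx)).neg
    rw [neg_neg] at h
    exact h
  have hint : IntervalIntegrable (DD w a lam r₀) volume r s :=
    ((lem_DDcont hwC ha hwneg hr₀).mono hsub).intervalIntegrable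
  have := intervalIntegral.integral_eq_sub_of_hasDerivAt hder hint
  rw [this]
  ring

include hC₂ hw_ub in
lemma lem_Phi_bound_fin {h : ℝ → ℂ} {r s : ℝ}
    (hr : r ∈ Set.Ioo (0:ℝ) 1) (hs : s ∈ Set.Ioo (0:ℝ) 1) (hrs : r ≤ s)
    (hh : ContinuousOn h (Set.Icc 0 1)) {N : ℝ}
    (hN : ∀ η ∈ Set.Icc r s, ‖h η‖ ≤ N * (lam.re - a η)) :
    ‖∫ η in r..s, h η / (w η : ℂ) * Complex.exp (-(AA w a lam r₀ η))‖
      ≤ N * (uu w a lam r₀ r - uu w a lam r₀ s) := by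
  have hδ : 0 < lam.re - ω₀ := by linarith
  have hN0 : 0 ≤ N := by
    have h1 := hN r ⟨le_refl r, hrs⟩
    have h2 := hub r (Ioo_subset_Icc_self hr)
    nlinarith [norm_nonneg (h r)]
  have hsub : Set.uIcc r s ⊆ Set.Ioo 0 1 := Set.ordConnected_Ioo.uIcc_subset hr hs
  have hDD_ii : IntervalIntegrable (fun η => N * DD w a lam r₀ η) volume r s :=
    (((lem_DDcont hwC ha hwneg hr₀).mono hsub).intervalIntegrable).const_mul N
  have husub : 0 ≤ uu w a lam r₀ r - uu w a lam r₀ s := by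
    rw [← lem_DD_fin hwC ha hwneg hr₀ hr hs]
    apply intervalIntegral.integral_nonneg hrs
    intro x hx
    exact lem_DDnonneg hub hlam hwneg (hsub (by rw [Set.uIcc_of_le hrs]; exact hx))
  have hb := intervalIntegral.norm_integral_le_of_norm_le (μ := volume)
    (f := fun η => h η / (w η : ℂ) * Complex.exp (-(AA w a lam r₀ η)))
    (g := fun η => N * DD w a lam r₀ η) (a := r) (b := s) hrs ?_ hDD_ii
  · have heq : ∫ η in r..s, N * DD w a lam r₀ η
        = N * (uu w a lam r₀ r - uu w a lam r₀ s) := by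
      rw [intervalIntegral.integral_const_mul, lem_DD_fin hwC ha hwneg hr₀ hr hs]
    rw [heq] at hb
    exact hb
  · apply Filter.Eventually.of_forall
    intro η hη
    change ‖h η / (w η : ℂ) * Complex.exp (-(AA w a lam r₀ η))‖ ≤ N * DD w a lam r₀ η
    have hηI : η ∈ Set.Ioo (0:ℝ) 1 :=
      hsub (by rw [Set.uIcc_of_le hrs]; exact Set.Ioc_subset_Icc_self hη)
    rw [lem_normPhi (hwneg η hηI)]
    have hw' : 0 < -w η := neg_pos.mpr (hwneg η hηI)
    calc ‖h η‖ / (-(w η)) * uu w a lam r₀ η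
        ≤ (N * (lam.re - a η)) / (-(w η)) * uu w a lam r₀ η := by
          gcongr
          · exact Real.exp_nonneg _
          · exact hN η (Set.Ioc_subset_Icc_self hη)
      _ = N * DD w a lam r₀ η := by
          unfold DD
          rw [lem_ggre']
          ring

lemma lem_exp1 {r : ℝ} (hr : r ∈ Set.Ioo (0:ℝ) 1) :
    ∫ η in r..(1:ℝ), gg w a lam η * Complex.exp (-(AA w a lam r₀ η))
      = Complex.exp (-(AA w a lam r₀ r)) := by
  have hii : IntervalIntegrable
      (fun η => gg w a lam η * Complex.exp (-(AA w a lam r₀ η))) volume r 1 := by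
    have := lem_Phi_ii hC₁ hwC hw_lb ha hub hlam hwneg hr₀
      (h := fun η => (a η : ℂ) - lam)
      ((Complex.continuous_ofReal.comp_continuousOn ha).sub continuousOn_const) hr
    exact this
  set V : ℝ → ℂ := fun s => if s < 1 then -Complex.exp (-(AA w a lam r₀ s)) else 0 with hV
  have hV1 : V 1 = 0 := by simp [hV]
  have hVoflt : ∀ s : ℝ, s < 1 → V s = -Complex.exp (-(AA w a lam r₀ s)) := by
    intro s hs; simp [hV, hs]
  have hAAcont : ContinuousOn (AA w a lam r₀) (Set.Ioo 0 1) :=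
    fun x hx => ((lem_AAder hwC ha hwneg hr₀ hx).continuousAt).continuousWithinAt
  have hVcont : ContinuousOn V (Set.Icc r 1) := by
    intro x hx
    rcases eq_or_lt_of_le hx.2 with h1 | h1
    · subst h1
      have hnorm : Filter.Tendsto (fun s => ‖-Complex.exp (-(AA w a lam r₀ s))‖)
          (nhdsWithin 1 (Set.Iio 1)) (nhds 0) := by
        apply (lem_u1 hC₁ hwC hw_lb ha hub hlam hwneg hr₀).congr
        intro s
        simp [uu, Complex.norm_exp]
      have hten0 : Filter.Tendsto (fun s => -Complex.exp (-(AA w a lam r₀ s)))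
          (nhdsWithin 1 (Set.Iio 1)) (nhds 0) := by
        rw [tendsto_zero_iff_norm_tendsto_zero]
        exact hnorm
      have hten : Filter.Tendsto V (nhdsWithin 1 (Set.Iio 1)) (nhds 0) := by
        apply Filter.Tendsto.congr' ?_ hten0
        filter_upwards [self_mem_nhdsWithin] with s hs
        rw [hVoflt s hs]
      have h2 : ContinuousWithinAt V (Set.Iio 1) 1 := by
        unfold ContinuousWithinAt
        rw [hV1]; exact hten
      exact (continuousWithinAt_insert_self.mpr h2).mono
        (fun y hy => by
          rcases lt_or_eq_of_le hy.2 with h | h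
          · exact Set.mem_insert_of_mem _ h
          · rw [h]; exact Set.mem_insert _ _)
    · have hxI : x ∈ Set.Ioo (0:ℝ) 1 := ⟨lt_of_lt_of_le hr.1 hx.1, h1⟩
      apply ContinuousAt.continuousWithinAt
      apply ContinuousAt.congr
        (((Complex.continuous_exp.comp_continuousOn hAAcont.neg) x hxI).continuousAt
          (Ioo_mem_nhds hxI.1 hxI.2)).neg
      filter_upwards [Iio_mem_nhds h1] with s hs
      rw [hVoflt s hs]
      rfl
  have hVder : ∀ x ∈ Set.Ioo r 1,
      HasDerivAt V (gg w a lam x * Complex.exp (-(AA w a lam r₀ x))) x := by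
    intro x hx
    have hxI : x ∈ Set.Ioo (0:ℝ) 1 := ⟨lt_trans hr.1 hx.1, hx.2⟩
    have h := ((lem_AAder (lam := lam) hwC ha hwneg hr₀ hxI).neg.cexp).neg
    have heq : -(Complex.exp (-(AA w a lam r₀ x)) * -gg w a lam x)
        = gg w a lam x * Complex.exp (-(AA w a lam r₀ x)) := by ring
    simp only [Pi.neg_apply] at h
    rw [heq] at h
    apply h.congr_of_eventuallyEq
    filter_upwards [Iio_mem_nhds hx.2] with s hs
    rw [hVoflt s hs]; rfl
  have := intervalIntegral.integral_eq_sub_of_hasDeriv_right_of_le (le_of_lt hr.2) hVcont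
    (fun x hx => (hVder x hx).hasDerivWithinAt) hii
  rw [this, hV1, hVoflt r hr.2]
  ring

end Master

end Stmt14Aux

theorem stmt_14
    (w : ℝ → ℝ) (C₁ C₂ : ℝ) (hC₁ : 0 < C₁) (hC₂ : 0 < C₂)
    (hw : ContDiffOn ℝ 1 w (Set.Icc 0 1))
    (hw_lb : ∀ r ∈ Set.Icc (0:ℝ) 1, -C₁ * (r * (1 - r)) ≤ w r)
    (hw_ub : ∀ r ∈ Set.Icc (0:ℝ) 1, w r ≤ -C₂ * (r * (1 - r)))
    (a : ℝ → ℝ) (ha : ContinuousOn a (Set.Icc 0 1))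
    (ω₀ : ℝ) (hω₀ : IsGreatest (a '' Set.Icc (0:ℝ) 1) ω₀)
    (lam : ℂ) (hlam : ω₀ < lam.re)
    (f : ℝ → ℂ) (hf : ContinuousOn f (Set.Icc 0 1))
    (r₀ : ℝ) (hr₀ : r₀ ∈ Set.Ioo (0:ℝ) 1)
    (q : ℝ → ℂ)
    (hq : ∀ r ∈ Set.Ioo (0:ℝ) 1,
      q r = Complex.exp (∫ ρ in r₀..r, ((a ρ : ℂ) - lam) / (w ρ : ℂ)) *
        ∫ η in r..(1:ℝ),
          (f η / (w η : ℂ)) *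
            Complex.exp (-∫ ρ in r₀..η, ((a ρ : ℂ) - lam) / (w ρ : ℂ))) :
    ∃ Q Q' : ℝ → ℂ,
      ContinuousOn Q (Set.Icc 0 1) ∧
      Set.EqOn Q q (Set.Ioo 0 1) ∧
      (∀ r ∈ Set.Ioo (0:ℝ) 1, HasDerivAt Q (Q' r) r) ∧
      ContinuousOn Q' (Set.Ioo 0 1) ∧
      (∀ r ∈ Set.Ioo (0:ℝ) 1,
        -(w r : ℂ) * Q' r + (a r : ℂ) * Q r - lam * Q r = f r) ∧
      (∀ N : ℝ, (∀ η ∈ Set.Icc (0:ℝ) 1, ‖f η‖ / (lam.re - a η) ≤ N) →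
        ∀ r ∈ Set.Icc (0:ℝ) 1, ‖Q r‖ ≤ N) ∧
      (∀ Nf : ℝ, (∀ η ∈ Set.Icc (0:ℝ) 1, ‖f η‖ ≤ Nf) →
        ∀ r ∈ Set.Icc (0:ℝ) 1, ‖Q r‖ ≤ Nf / (lam.re - ω₀)) := by
  classical
  have hwC : ContinuousOn w (Set.Icc 0 1) := hw.continuousOn
  have hub : ∀ r ∈ Set.Icc (0:ℝ) 1, a r ≤ ω₀ := fun r hr => hω₀.2 ⟨r, hr, rfl⟩
  have hδ : 0 < lam.re - ω₀ := by linarith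
  have hwneg : ∀ r ∈ Set.Ioo (0:ℝ) 1, w r < 0 := by
    intro r hr
    have h := hw_ub r (Set.Ioo_subset_Icc_self hr)
    nlinarith [mul_pos hr.1 (sub_pos.2 hr.2), hC₂]
  have hwne : ∀ r ∈ Set.Ioo (0:ℝ) 1, (w r : ℂ) ≠ 0 := fun r hr => by
    exact_mod_cast (hwneg r hr).ne
  set F : ℝ → ℂ := fun η => f η / (w η : ℂ) * Complex.exp (-(AA w a lam r₀ η)) with hF
  set G : ℝ → ℂ := fun r => ∫ η in r..(1:ℝ), F η with hG
  set c₀ : ℂ := f 0 / ((a 0 : ℂ) - lam) with hc₀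
  set c₁ : ℂ := f 1 / ((a 1 : ℂ) - lam) with hc₁
  set Q : ℝ → ℂ := fun r => if r ≤ 0 then c₀ else if 1 ≤ r then c₁ else
    Complex.exp (AA w a lam r₀ r) * G r with hQdef
  set Q' : ℝ → ℂ := fun r => gg w a lam r * Q r - f r / (w r : ℂ) with hQ'def
  have hQmid : ∀ r ∈ Set.Ioo (0:ℝ) 1, Q r = Complex.exp (AA w a lam r₀ r) * G r := by
    intro r hr
    simp only [hQdef]
    rw [if_neg (not_le.mpr hr.1), if_neg (not_le.mpr hr.2)]
  have hEqOn : Set.EqOn Q q (Set.Ioo 0 1) := by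
    intro r hr
    rw [hQmid r hr, hq r hr]
    simp only [hG, hF, AA, gg]
  have hFc : ContinuousOn F (Set.Ioo 0 1) := lem_Phicont hwC ha hwneg hr₀ hf
  have hFii1 : ∀ r ∈ Set.Ioo (0:ℝ) 1, IntervalIntegrable F volume r 1 := fun r hr =>
    lem_Phi_ii hC₁ hwC hw_lb ha hub hlam hwneg hr₀ hf hr
  have hFiifin : ∀ x ∈ Set.Ioo (0:ℝ) 1, ∀ y ∈ Set.Ioo (0:ℝ) 1,
      IntervalIntegrable F volume x y := fun x hx y hy =>
    (hFc.mono (Set.ordConnected_Ioo.uIcc_subset hx hy)).intervalIntegrable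
  have hGsplit : ∀ x ∈ Set.Ioo (0:ℝ) 1, ∀ s ∈ Set.Ioo (0:ℝ) 1,
      G x = (∫ η in x..s, F η) + G s := by
    intro x hx s hs
    simp only [hG]
    rw [intervalIntegral.integral_add_adjacent_intervals (hFiifin x hx s hs) (hFii1 s hs)]
  have hGder : ∀ r ∈ Set.Ioo (0:ℝ) 1, HasDerivAt G (-(F r)) r := by
    intro r hr
    have h1 : HasDerivAt (fun x => ∫ η in x..r, F η) (-(F r)) r :=
      intervalIntegral.integral_hasDerivAt_left (by simp)
        (hFc.stronglyMeasurableAtFilter isOpen_Ioo r hr)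
        (hFc.continuousAt (Ioo_mem_nhds hr.1 hr.2))
    have h2 : HasDerivAt (fun x => (∫ η in x..r, F η) + G r) (-(F r)) r := h1.add_const _
    apply h2.congr_of_eventuallyEq
    filter_upwards [Ioo_mem_nhds hr.1 hr.2] with x hx
    exact hGsplit x hx r hr
  have hexpAA : ∀ y : ℝ, Complex.exp (AA w a lam r₀ y) * Complex.exp (-(AA w a lam r₀ y)) = 1 := by
    intro y
    rw [← Complex.exp_add]
    simp
  have hQder : ∀ r ∈ Set.Ioo (0:ℝ) 1, HasDerivAt Q (Q' r) r := by
    intro r hr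
    have hE : HasDerivAt (fun x => Complex.exp (AA w a lam r₀ x))
        (gg w a lam r * Complex.exp (AA w a lam r₀ r)) r := by
      have h := (lem_AAder (lam := lam) hwC ha hwneg hr₀ hr).cexp
      convert h using 1
      ring
    have hmul := hE.mul (hGder r hr)
    have heq : gg w a lam r * Complex.exp (AA w a lam r₀ r) * G r
        + Complex.exp (AA w a lam r₀ r) * -(F r) = Q' r := by
      simp only [hQ'def, hF]
      rw [hQmid r hr]
      calc gg w a lam r * Complex.exp (AA w a lam r₀ r) * G r
          + Complex.exp (AA w a lam r₀ r)
            * -(f r / (w r : ℂ) * Complex.exp (-(AA w a lam r₀ r)))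
          = gg w a lam r * (Complex.exp (AA w a lam r₀ r) * G r)
            - f r / (w r : ℂ)
              * (Complex.exp (AA w a lam r₀ r) * Complex.exp (-(AA w a lam r₀ r))) := by
            ring
        _ = _ := by rw [hexpAA r]; ring
    rw [← heq]
    apply hmul.congr_of_eventuallyEq
    filter_upwards [Ioo_mem_nhds hr.1 hr.2] with x hx
    exact hQmid x hx
  have hQcIoo : ContinuousOn Q (Set.Ioo 0 1) := fun r hr =>
    ((hQder r hr).continuousAt).continuousWithinAt
  have hQ'c : ContinuousOn Q' (Set.Ioo 0 1) := by
    simp only [hQ'def]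
    apply ContinuousOn.sub
    · exact (lem_ggcont hwC ha hwneg).mul hQcIoo
    · exact ContinuousOn.div (hf.mono Set.Ioo_subset_Icc_self)
        (Complex.continuous_ofReal.comp_continuousOn (hwC.mono Set.Ioo_subset_Icc_self)) hwne
  have hODE : ∀ r ∈ Set.Ioo (0:ℝ) 1, -(w r : ℂ) * Q' r + (a r : ℂ) * Q r - lam * Q r = f r := by
    intro r hr
    have hwr := hwne r hr
    simp only [hQ'def, gg]
    field_simp
    ring
  have hB1 : ∀ N : ℝ, (∀ η ∈ Set.Icc (0:ℝ) 1, ‖f η‖ / (lam.re - a η) ≤ N) →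
      ∀ r ∈ Set.Icc (0:ℝ) 1, ‖Q r‖ ≤ N := by
    intro N hN r hr
    have hNmul : ∀ η ∈ Set.Icc (0:ℝ) 1, ‖f η‖ ≤ N * (lam.re - a η) := by
      intro η hη
      have hp : 0 < lam.re - a η := by linarith [hub η hη]
      have h := hN η hη
      rw [div_le_iff₀ hp] at h
      linarith
    have hend : ∀ i ∈ Set.Icc (0:ℝ) 1, ‖f i / ((a i : ℂ) - lam)‖ ≤ N := by
      intro i hi
      have hp : 0 < lam.re - a i := by linarith [hub i hi]
      rw [norm_div]
      have habs : lam.re - a i ≤ ‖(a i : ℂ) - lam‖ := by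
        have h1 := Complex.abs_re_le_norm ((a i : ℂ) - lam)
        rw [Complex.sub_re, Complex.ofReal_re] at h1
        rw [abs_of_neg (by linarith)] at h1
        linarith
      calc ‖f i‖ / ‖(a i : ℂ) - lam‖ ≤ ‖f i‖ / (lam.re - a i) :=
            div_le_div_of_nonneg_left (norm_nonneg _) hp habs
        _ ≤ N := hN i hi
    rcases le_or_gt r 0 with h0 | h0
    · have hQr : Q r = c₀ := by simp only [hQdef]; rw [if_pos h0]
      rw [hQr, hc₀]
      exact hend 0 (by norm_num)
    rcases le_or_gt 1 r with h1 | h1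
    · have hQr : Q r = c₁ := by
        simp only [hQdef]
        rw [if_neg (not_le.mpr h0), if_pos h1]
      rw [hQr, hc₁]
      exact hend 1 (by norm_num)
    · have hrI : r ∈ Set.Ioo (0:ℝ) 1 := ⟨h0, h1⟩
      rw [hQmid r hrI, norm_mul, Complex.norm_exp]
      have hb : ‖G r‖ ≤ N * uu w a lam r₀ r := by
        have h := lem_Phi_bound1 hC₁ hC₂ hwC hw_lb hw_ub ha hub hlam hwneg hr₀ hf hrI
          (N := N) (fun η hη => hNmul η ⟨le_trans (le_of_lt h0) hη.1, hη.2⟩)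
        simpa only [hG, hF] using h
      calc Real.exp ((AA w a lam r₀ r).re) * ‖G r‖
          ≤ Real.exp ((AA w a lam r₀ r).re) * (N * uu w a lam r₀ r) := by
            exact mul_le_mul_of_nonneg_left hb (Real.exp_nonneg _)
        _ = N * (Real.exp ((AA w a lam r₀ r).re) * Real.exp (-(AA w a lam r₀ r).re)) := by
            simp only [uu]; ring
        _ = N := by rw [← Real.exp_add]; simp
  have hB2 : ∀ Nf : ℝ, (∀ η ∈ Set.Icc (0:ℝ) 1, ‖f η‖ ≤ Nf) →
      ∀ r ∈ Set.Icc (0:ℝ) 1, ‖Q r‖ ≤ Nf / (lam.re - ω₀) := by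
    intro Nf hNf r hr
    apply hB1 _ ?_ r hr
    intro η hη
    have hp : 0 < lam.re - a η := by linarith [hub η hη]
    have hNf0 : 0 ≤ Nf := le_trans (norm_nonneg _) (hNf 0 (by norm_num))
    exact div_le_div₀ hNf0 (hNf η hη) hδ (by linarith [hub η hη])
  have hQc : ContinuousOn Q (Set.Icc 0 1) := by
    intro x hx
    rcases eq_or_lt_of_le hx.1 with h0 | h0
    · -- x = 0
      have hx0 : x = 0 := h0.symm
      subst hx0
      have hQ0 : Q 0 = c₀ := by
        simp only [hQdef]
        rw [if_pos le_rfl]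
      have hane : ((a 0 : ℂ) - lam) ≠ 0 := by
        intro h
        have h2 : ((a 0 : ℂ) - lam).re = 0 := by rw [h]; simp
        rw [Complex.sub_re, Complex.ofReal_re] at h2
        have := hub 0 (by norm_num)
        linarith
      set hc : ℝ → ℂ := fun η => f η - c₀ * ((a η : ℂ) - lam) with hhc
      have hhcc : ContinuousOn hc (Set.Icc 0 1) :=
        hf.sub (continuousOn_const.mul
          ((Complex.continuous_ofReal.comp_continuousOn ha).sub continuousOn_const))
      have hφc : ContinuousOn (fun η => ‖hc η‖ / (lam.re - a η)) (Set.Icc 0 1) :=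
        (hhcc.norm).div (continuousOn_const.sub ha) (fun η hη => by
          have := hub η hη
          have hp : 0 < lam.re - a η := by linarith
          exact hp.ne')
      have hφ0 : ‖hc 0‖ / (lam.re - a 0) = 0 := by
        have hz : hc 0 = 0 := by
          simp only [hhc, hc₀]
          rw [div_mul_cancel₀ _ hane]
          ring
        rw [hz]
        simp
      rw [Metric.continuousWithinAt_iff]
      intro ε hε
      have hcw := hφc 0 (by norm_num)
      rw [Metric.continuousWithinAt_iff] at hcw
      obtain ⟨d₁, hd₁, hball⟩ := hcw (ε/4) (by positivity)
      set s : ℝ := min (d₁/2) r₀ with hsdef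
      have hs0 : 0 < s := lt_min (by linarith) hr₀.1
      have hsI : s ∈ Set.Ioo (0:ℝ) 1 := ⟨hs0, lt_of_le_of_lt (min_le_right _ _) hr₀.2⟩
      set M : ℝ := ‖c₀ * Complex.exp (-(AA w a lam r₀ s))‖ + ‖G s‖ with hMdef
      have hM0 : 0 ≤ M := add_nonneg (norm_nonneg _) (norm_nonneg _)
      have hE0 := lem_E0 hC₁ hwC hw_lb ha hub hlam hwneg hr₀
      rw [Metric.tendsto_nhdsWithin_nhds] at hE0
      obtain ⟨d₂, hd₂, hE0'⟩ := hE0 (ε/(2*(M+1))) (by positivity)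
      refine ⟨min s d₂, by positivity, ?_⟩
      intro y hy hdist
      rcases eq_or_lt_of_le hy.1 with hy0 | hy0
      · rw [← hy0]
        simpa [dist_self] using hε
      · have habs : |y| < min s d₂ := by
          rw [Real.dist_eq, sub_zero] at hdist
          exact hdist
        rw [abs_of_pos hy0] at habs
        have hys : y < s := lt_of_lt_of_le habs (min_le_left _ _)
        have hyI : y ∈ Set.Ioo (0:ℝ) 1 := ⟨hy0, lt_trans hys hsI.2⟩
        have hbound : ∀ η ∈ Set.Icc y s, ‖hc η‖ ≤ (ε/4) * (lam.re - a η) := by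
          intro η hη
          have hηI : η ∈ Set.Icc (0:ℝ) 1 :=
            ⟨le_trans (le_of_lt hy0) hη.1, le_trans hη.2 (le_of_lt hsI.2)⟩
          have hp : 0 < lam.re - a η := by linarith [hub η hηI]
          have hdη : dist η 0 < d₁ := by
            rw [Real.dist_eq, sub_zero, abs_of_nonneg hηI.1]
            calc η ≤ s := hη.2
              _ ≤ d₁/2 := min_le_left _ _
              _ < d₁ := by linarith
          have hφη := hball hηI hdη
          rw [Real.dist_eq, hφ0, sub_zero] at hφη
          have h4 : ‖hc η‖ / (lam.re - a η) < ε/4 := by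
            have := abs_lt.mp hφη
            linarith [this.1, this.2]
          rw [div_lt_iff₀ hp] at h4
          linarith
        have hggfin : ∫ η in y..s, gg w a lam η * Complex.exp (-(AA w a lam r₀ η))
            = Complex.exp (-(AA w a lam r₀ y)) - Complex.exp (-(AA w a lam r₀ s)) := by
          have hsub : Set.uIcc y s ⊆ Set.Ioo 0 1 := Set.ordConnected_Ioo.uIcc_subset hyI hsI
          have hder : ∀ t ∈ Set.uIcc y s,
              HasDerivAt (fun t => -Complex.exp (-(AA w a lam r₀ t)))
                (gg w a lam t * Complex.exp (-(AA w a lam r₀ t))) t := by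
            intro t ht
            have h := ((lem_AAder (lam := lam) hwC ha hwneg hr₀ (hsub ht)).neg.cexp).neg
            convert h using 1
            all_goals first | rfl | (simp only [Pi.neg_apply]; ring)
          have hint : IntervalIntegrable
              (fun η => gg w a lam η * Complex.exp (-(AA w a lam r₀ η))) volume y s := by
            apply ContinuousOn.intervalIntegrable
            apply ContinuousOn.mul ((lem_ggcont hwC ha hwneg).mono hsub)
            apply Complex.continuous_exp.comp_continuousOn
            exact ContinuousOn.neg (fun t ht =>
              ((lem_AAder (lam := lam) hwC ha hwneg hr₀ (hsub ht)).continuousAt).continuousWithinAt)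
          rw [intervalIntegral.integral_eq_sub_of_hasDerivAt hder hint]
          ring
        have hintc : IntervalIntegrable
            (fun η => hc η / (w η : ℂ) * Complex.exp (-(AA w a lam r₀ η))) volume y s :=
          ((lem_Phicont hwC ha hwneg hr₀ hhcc).mono
            (Set.ordConnected_Ioo.uIcc_subset hyI hsI)).intervalIntegrable
        have hintg : IntervalIntegrable
            (fun η => gg w a lam η * Complex.exp (-(AA w a lam r₀ η))) volume y s := by
          apply ContinuousOn.intervalIntegrable
          apply ContinuousOn.mul
            ((lem_ggcont hwC ha hwneg).mono (Set.ordConnected_Ioo.uIcc_subset hyI hsI))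
          apply Complex.continuous_exp.comp_continuousOn
          exact ContinuousOn.neg (fun t ht =>
            ((lem_AAder (lam := lam) hwC ha hwneg hr₀
              ((Set.ordConnected_Ioo.uIcc_subset hyI hsI) ht)).continuousAt).continuousWithinAt)
        have hsplitint : ∫ η in y..s, F η
            = (∫ η in y..s, hc η / (w η : ℂ) * Complex.exp (-(AA w a lam r₀ η)))
              + c₀ * (Complex.exp (-(AA w a lam r₀ y)) - Complex.exp (-(AA w a lam r₀ s))) := by
          have hsplit : Set.EqOn F (fun η => hc η / (w η : ℂ)
              * Complex.exp (-(AA w a lam r₀ η))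
              + c₀ * (gg w a lam η * Complex.exp (-(AA w a lam r₀ η)))) (Set.uIcc y s) := by
            intro η _
            simp only [hF, hhc, gg]
            ring
          rw [intervalIntegral.integral_congr hsplit,
            intervalIntegral.integral_add hintc (hintg.const_mul c₀),
            intervalIntegral.integral_const_mul, hggfin]
        have hQy : Q y - c₀ = Complex.exp (AA w a lam r₀ y)
            * (∫ η in y..s, hc η / (w η : ℂ) * Complex.exp (-(AA w a lam r₀ η)))
            - c₀ * (Complex.exp (AA w a lam r₀ y) * Complex.exp (-(AA w a lam r₀ s)))
            + Complex.exp (AA w a lam r₀ y) * G s := by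
          rw [hQmid y hyI, hGsplit y hyI s hsI, hsplitint]
          have h1 := hexpAA y
          calc Complex.exp (AA w a lam r₀ y)
                * ((∫ η in y..s, hc η / (w η : ℂ) * Complex.exp (-(AA w a lam r₀ η)))
                  + c₀ * (Complex.exp (-(AA w a lam r₀ y)) - Complex.exp (-(AA w a lam r₀ s)))
                  + G s) - c₀
              = Complex.exp (AA w a lam r₀ y)
                  * (∫ η in y..s, hc η / (w η : ℂ) * Complex.exp (-(AA w a lam r₀ η)))
                - c₀ * (Complex.exp (AA w a lam r₀ y) * Complex.exp (-(AA w a lam r₀ s)))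
                + Complex.exp (AA w a lam r₀ y) * G s
                + c₀ * (Complex.exp (AA w a lam r₀ y) * Complex.exp (-(AA w a lam r₀ y)))
                - c₀ := by ring
            _ = _ := by rw [h1]; ring
        have hPh : ‖∫ η in y..s, hc η / (w η : ℂ) * Complex.exp (-(AA w a lam r₀ η))‖
            ≤ (ε/4) * (uu w a lam r₀ y - uu w a lam r₀ s) :=
          lem_Phi_bound_fin hC₁ hC₂ hwC hw_lb hw_ub ha hub hlam hwneg hr₀ hyI hsI
            (le_of_lt hys) hhcc hbound
        have hEy : Real.exp ((AA w a lam r₀ y).re) < ε/(2*(M+1)) := by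
          have h5 := hE0' (Set.mem_Ioi.mpr hy0)
            (by rw [Real.dist_eq, sub_zero, abs_of_pos hy0]
                exact lt_of_lt_of_le habs (min_le_right _ _))
          rw [Real.dist_eq, sub_zero, abs_of_nonneg (Real.exp_nonneg _)] at h5
          exact h5
        have hE1 : Real.exp ((AA w a lam r₀ y).re) * uu w a lam r₀ y = 1 := by
          simp only [uu]
          rw [← Real.exp_add]
          simp
        have huus : 0 ≤ uu w a lam r₀ s := Real.exp_nonneg _
        have huuy : 0 ≤ uu w a lam r₀ y := Real.exp_nonneg _
        rw [dist_eq_norm, hQ0, hQy]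
        have hT1 : ‖Complex.exp (AA w a lam r₀ y)
            * (∫ η in y..s, hc η / (w η : ℂ) * Complex.exp (-(AA w a lam r₀ η)))‖ ≤ ε/4 := by
          rw [norm_mul, Complex.norm_exp]
          calc Real.exp ((AA w a lam r₀ y).re)
                * ‖∫ η in y..s, hc η / (w η : ℂ) * Complex.exp (-(AA w a lam r₀ η))‖
              ≤ Real.exp ((AA w a lam r₀ y).re) * ((ε/4) * (uu w a lam r₀ y - uu w a lam r₀ s)) :=
                mul_le_mul_of_nonneg_left hPh (Real.exp_nonneg _)
            _ ≤ Real.exp ((AA w a lam r₀ y).re) * ((ε/4) * uu w a lam r₀ y) := by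
                apply mul_le_mul_of_nonneg_left ?_ (Real.exp_nonneg _)
                apply mul_le_mul_of_nonneg_left ?_ (by linarith)
                linarith
            _ = (ε/4) * (Real.exp ((AA w a lam r₀ y).re) * uu w a lam r₀ y) := by ring
            _ = ε/4 := by rw [hE1]; ring
        have hT23 : ‖-(c₀ * (Complex.exp (AA w a lam r₀ y) * Complex.exp (-(AA w a lam r₀ s))))
            + Complex.exp (AA w a lam r₀ y) * G s‖ ≤ Real.exp ((AA w a lam r₀ y).re) * M := by
          apply le_trans (norm_add_le _ _)
          rw [norm_neg, hMdef]
          have e2 : ‖c₀ * (Complex.exp (AA w a lam r₀ y) * Complex.exp (-(AA w a lam r₀ s)))‖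
              = Real.exp ((AA w a lam r₀ y).re) * ‖c₀ * Complex.exp (-(AA w a lam r₀ s))‖ := by
            rw [show c₀ * (Complex.exp (AA w a lam r₀ y) * Complex.exp (-(AA w a lam r₀ s)))
                = Complex.exp (AA w a lam r₀ y) * (c₀ * Complex.exp (-(AA w a lam r₀ s))) from
                  by ring]
            rw [norm_mul, Complex.norm_exp]
          have e3 : ‖Complex.exp (AA w a lam r₀ y) * G s‖
              = Real.exp ((AA w a lam r₀ y).re) * ‖G s‖ := by
            rw [norm_mul, Complex.norm_exp]
          rw [e2, e3, mul_add]
        have hfinal : ‖Complex.exp (AA w a lam r₀ y)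
            * (∫ η in y..s, hc η / (w η : ℂ) * Complex.exp (-(AA w a lam r₀ η)))
            - c₀ * (Complex.exp (AA w a lam r₀ y) * Complex.exp (-(AA w a lam r₀ s)))
            + Complex.exp (AA w a lam r₀ y) * G s‖ ≤ ε/4 + Real.exp ((AA w a lam r₀ y).re) * M := by
          rw [sub_eq_add_neg, add_assoc]
          exact le_trans (norm_add_le _ _) (add_le_add hT1 hT23)
        apply lt_of_le_of_lt hfinal
        have hEM : Real.exp ((AA w a lam r₀ y).re) * M ≤ ε/(2*(M+1)) * M := by
          apply mul_le_mul_of_nonneg_right (le_of_lt hEy) hM0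
        have hMM : ε/(2*(M+1)) * M ≤ ε/2 := by
          rw [div_mul_eq_mul_div, div_le_div_iff₀ (by positivity) (by norm_num)]
          nlinarith
        linarith
    rcases eq_or_lt_of_le hx.2 with h1 | h1
    · -- x = 1
      subst h1
      have hQ1 : Q 1 = c₁ := by
        simp only [hQdef]
        rw [if_neg (by norm_num), if_pos le_rfl]
      have hane : ((a 1 : ℂ) - lam) ≠ 0 := by
        intro h
        have h2 : ((a 1 : ℂ) - lam).re = 0 := by rw [h]; simp
        rw [Complex.sub_re, Complex.ofReal_re] at h2
        have := hub 1 (by norm_num)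
        linarith
      set hc : ℝ → ℂ := fun η => f η - c₁ * ((a η : ℂ) - lam) with hhc
      have hhcc : ContinuousOn hc (Set.Icc 0 1) :=
        hf.sub (continuousOn_const.mul
          ((Complex.continuous_ofReal.comp_continuousOn ha).sub continuousOn_const))
      have hφc : ContinuousOn (fun η => ‖hc η‖ / (lam.re - a η)) (Set.Icc 0 1) :=
        (hhcc.norm).div (continuousOn_const.sub ha) (fun η hη => by
          have := hub η hη
          have hp : 0 < lam.re - a η := by linarith
          exact hp.ne')
      have hφ1 : ‖hc 1‖ / (lam.re - a 1) = 0 := by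
        have hz : hc 1 = 0 := by
          simp only [hhc, hc₁]
          rw [div_mul_cancel₀ _ hane]
          ring
        rw [hz]
        simp
      rw [Metric.continuousWithinAt_iff]
      intro ε hε
      have hcw := hφc 1 (by norm_num)
      rw [Metric.continuousWithinAt_iff] at hcw
      obtain ⟨d₁, hd₁, hball⟩ := hcw (ε/2) (by positivity)
      refine ⟨min d₁ (1/2), by positivity, ?_⟩
      intro y hy hdist
      rcases eq_or_lt_of_le hy.2 with hy1 | hy1
      · rw [hy1]
        simpa [dist_self] using hε
      · have habs : |y - 1| < min d₁ (1/2) := by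
          rw [Real.dist_eq] at hdist
          exact hdist
        have hy0 : (0:ℝ) < y := by
          have h2 := abs_lt.mp (lt_of_lt_of_le habs (min_le_right _ _))
          linarith [h2.1]
        have hyI : y ∈ Set.Ioo (0:ℝ) 1 := ⟨hy0, hy1⟩
        have hbound : ∀ η ∈ Set.Icc y 1, ‖hc η‖ ≤ (ε/2) * (lam.re - a η) := by
          intro η hη
          have hηI : η ∈ Set.Icc (0:ℝ) 1 := ⟨le_trans (le_of_lt hy0) hη.1, hη.2⟩
          have hp : 0 < lam.re - a η := by linarith [hub η hηI]
          have hdη : dist η 1 < d₁ := by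
            rw [Real.dist_eq]
            rw [abs_of_nonpos (by linarith [hη.2])]
            have h3 : -(y - 1) < min d₁ (1/2) := by
              rw [abs_of_nonpos (by linarith [hy1.le])] at habs
              exact habs
            calc -(η - 1) = 1 - η := by ring
              _ ≤ 1 - y := by linarith [hη.1]
              _ = -(y - 1) := by ring
              _ < min d₁ (1/2) := h3
              _ ≤ d₁ := min_le_left _ _
          have hφη := hball hηI hdη
          rw [Real.dist_eq, hφ1, sub_zero] at hφη
          have h4 : ‖hc η‖ / (lam.re - a η) < ε/2 := by
            have := abs_lt.mp hφη
            linarith [this.1, this.2]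
          rw [div_lt_iff₀ hp] at h4
          linarith
        have hPh : ‖∫ η in y..(1:ℝ), hc η / (w η : ℂ) * Complex.exp (-(AA w a lam r₀ η))‖
            ≤ (ε/2) * uu w a lam r₀ y :=
          lem_Phi_bound1 hC₁ hC₂ hwC hw_lb hw_ub ha hub hlam hwneg hr₀ hhcc hyI hbound
        have hGy : G y = (∫ η in y..(1:ℝ), hc η / (w η : ℂ)
              * Complex.exp (-(AA w a lam r₀ η)))
            + c₁ * Complex.exp (-(AA w a lam r₀ y)) := by
          simp only [hG]
          have hsplit : Set.EqOn F (fun η => hc η / (w η : ℂ)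
              * Complex.exp (-(AA w a lam r₀ η))
              + c₁ * (gg w a lam η * Complex.exp (-(AA w a lam r₀ η)))) (Set.uIcc y 1) := by
            intro η _
            simp only [hF, hhc, gg]
            ring
          rw [intervalIntegral.integral_congr hsplit]
          rw [intervalIntegral.integral_add
            (lem_Phi_ii hC₁ hwC hw_lb ha hub hlam hwneg hr₀ hhcc hyI) ?_]
          · rw [intervalIntegral.integral_const_mul,
              lem_exp1 hC₁ hwC hw_lb ha hub hlam hwneg hr₀ hyI]
          · apply IntervalIntegrable.const_mul
            exact lem_Phi_ii hC₁ hwC hw_lb ha hub hlam hwneg hr₀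
              (h := fun η => (a η : ℂ) - lam)
              ((Complex.continuous_ofReal.comp_continuousOn ha).sub continuousOn_const) hyI
        have hQyc : Q y - c₁ = Complex.exp (AA w a lam r₀ y)
            * (∫ η in y..(1:ℝ), hc η / (w η : ℂ) * Complex.exp (-(AA w a lam r₀ η))) := by
          rw [hQmid y hyI, hGy, mul_add]
          rw [show Complex.exp (AA w a lam r₀ y) * (c₁ * Complex.exp (-(AA w a lam r₀ y)))
              = c₁ * (Complex.exp (AA w a lam r₀ y) * Complex.exp (-(AA w a lam r₀ y))) from
                by ring, hexpAA y, mul_one]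
          ring
        rw [dist_eq_norm, hQ1, hQyc, norm_mul, Complex.norm_exp]
        calc Real.exp ((AA w a lam r₀ y).re)
              * ‖∫ η in y..(1:ℝ), hc η / (w η : ℂ) * Complex.exp (-(AA w a lam r₀ η))‖
            ≤ Real.exp ((AA w a lam r₀ y).re) * ((ε/2) * uu w a lam r₀ y) :=
              mul_le_mul_of_nonneg_left hPh (Real.exp_nonneg _)
          _ = (ε/2) * (Real.exp ((AA w a lam r₀ y).re)
              * Real.exp (-(AA w a lam r₀ y).re)) := by
              simp only [uu]; ring
          _ = ε/2 := by rw [← Real.exp_add]; simp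
          _ < ε := by linarith

    · exact ((hQder x ⟨h0, h1⟩).continuousAt).continuousWithinAt
  exact ⟨Q, Q', hQc, hEqOn, hQder, hQ'c, hODE, hB1, hB2⟩
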